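/- Suppose the density of a multivariate Pareto distribution factorizes as f(y) = g(y_{A∪B}) h(y_{B∪C}) on L for disjoint A, C and B = A^c ∩ C^c possibly empty with A ∪ C = {1,…,d}: if B = ∅, i.e., f(y) = f_A(y_A) f_C(y_C) on L^k for some k ∈ A, where f_C(y_C) = λ(y_A, y_C)/λ_A(y_A) for all y_A ∈ L^k_A, then f_C is homogeneous of order -|C|, and no such function can be a probability density on [0,∞)^{|C|}. Concretely: a nonnegative measurable function on (0,∞)^m, m ≥ 1, that is homogeneous of order -m and not identically zero is not integrable on (0,∞)^m. -/

import Mathlib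

open MeasureTheory Set Pointwise

lemma scale_lintegral_smul_set (m : ℕ) (F : (Fin m → ℝ) → ENNReal) (hF : Measurable F)
    (t : ℝ) (ht : 0 < t)
    (hhomF : ∀ x, F (t • x) = ENNReal.ofReal ((t ^ m)⁻¹) * F x)
    (A : Set (Fin m → ℝ)) (hA : MeasurableSet A) :
    ∫⁻ y in t • A, F y = ∫⁻ y in A, F y := by
  have htm : (0:ℝ) < t ^ m := pow_pos ht m
  have hfr : Module.finrank ℝ (Fin m → ℝ) = m := by simp
  have hmap : Measure.map (t • ·) (volume : Measure (Fin m → ℝ)) =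
      ENNReal.ofReal |(t ^ m)⁻¹| • volume := by
    rw [Measure.map_addHaar_smul volume ht.ne', hfr]
  have hsA : MeasurableSet (t • A) := by
    rw [← Set.preimage_smul_inv₀ ht.ne']
    exact (measurable_const_smul _) hA
  have hpre : (t • ·) ⁻¹' (t • A) = A := by
    ext x
    simp [Set.mem_smul_set_iff_inv_smul_mem₀ ht.ne', inv_smul_smul₀ ht.ne']
  have h1 : ∫⁻ y in t • A, F y ∂(Measure.map (t • ·) volume)
      = ENNReal.ofReal |(t ^ m)⁻¹| * ∫⁻ y in t • A, F y := by
    rw [hmap, Measure.restrict_smul, lintegral_smul_measure, smul_eq_mul]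
  have h2 : ∫⁻ y in t • A, F y ∂(Measure.map (t • ·) volume)
      = ENNReal.ofReal ((t ^ m)⁻¹) * ∫⁻ y in A, F y := by
    rw [Measure.restrict_map (measurable_const_smul t) hsA, hpre,
      lintegral_map hF (measurable_const_smul t)]
    simp_rw [hhomF]
    rw [lintegral_const_mul _ hF]
  rw [abs_of_pos (by positivity)] at h1
  have hc0 : ENNReal.ofReal ((t ^ m)⁻¹) ≠ 0 := by
    rw [Ne, ENNReal.ofReal_eq_zero, not_le]
    positivity
  exact (ENNReal.mul_right_inj hc0 ENNReal.ofReal_ne_top).mp (h1.symm.trans h2)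

/-- A nonnegative measurable function on `(0,∞)^m`, `m ≥ 1`, that is
homogeneous of order `-m` and integrable on `(0,∞)^m` must vanish almost
everywhere there (i.e. a nonzero such homogeneous function is not integrable). -/
theorem homogeneous_neg_m_integrable_ae_zero (m : ℕ) (hm : 1 ≤ m)
    (g : (Fin m → ℝ) → ℝ)
    (hmeas : Measurable g) (hnonneg : ∀ y, 0 ≤ g y)
    (hhom : ∀ t : ℝ, 0 < t → ∀ y : Fin m → ℝ, (∀ i, 0 < y i) →
      g (t • y) = t ^ (-(m : ℝ)) * g y)
    (hint : IntegrableOn g {y : Fin m → ℝ | ∀ i, 0 < y i}) :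
    ∀ᵐ y ∂(volume.restrict {y : Fin m → ℝ | ∀ i, 0 < y i}), g y = 0 := by
  set S : Set (Fin m → ℝ) := {y | ∀ i, 0 < y i} with hSdef
  have hS : MeasurableSet S := by
    have : S = ⋂ i, {y : Fin m → ℝ | 0 < y i} := by ext y; simp [hSdef]
    rw [this]
    exact MeasurableSet.iInter fun i => measurableSet_lt measurable_const (measurable_pi_apply i)
  set F : (Fin m → ℝ) → ENNReal := S.indicator (fun y => ENNReal.ofReal (g y)) with hFdef
  have hF : Measurable F := (ENNReal.measurable_ofReal.comp hmeas).indicator hS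
  -- membership in S is scale invariant
  have hSsmul : ∀ t : ℝ, 0 < t → ∀ x : Fin m → ℝ, t • x ∈ S ↔ x ∈ S := by
    intro t ht x
    constructor
    · intro h i
      have h2 : 0 < t * x i := by simpa using h i
      nlinarith
    · intro h i
      simpa using mul_pos ht (h i)
  -- homogeneity of F
  have hhomF : ∀ t : ℝ, 0 < t → ∀ x, F (t • x) = ENNReal.ofReal ((t ^ m)⁻¹) * F x := by
    intro t ht x
    have hpow : t ^ (-(m : ℝ)) = (t ^ m)⁻¹ := by
      rw [Real.rpow_neg ht.le, Real.rpow_natCast]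
    by_cases hx : x ∈ S
    · have hx' : t • x ∈ S := (hSsmul t ht x).mpr hx
      rw [hFdef]
      simp only [Set.indicator_of_mem hx, Set.indicator_of_mem hx']
      rw [hhom t ht x hx, hpow, ENNReal.ofReal_mul (by positivity)]
    · have hx' : t • x ∉ S := fun h => hx ((hSsmul t ht x).mp h)
      rw [hFdef]
      simp [Set.indicator_of_notMem hx, Set.indicator_of_notMem hx']
  -- the annuli
  set A₀ : Set (Fin m → ℝ) := S ∩ {y | 1 ≤ ‖y‖ ∧ ‖y‖ < 2} with hA₀def
  have hA₀meas : MeasurableSet A₀ :=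
    hS.inter ((measurableSet_le measurable_const measurable_norm).inter
      (measurableSet_lt measurable_norm measurable_const))
  set A : ℤ → Set (Fin m → ℝ) := fun n => ((2:ℝ) ^ n) • A₀ with hAdef
  have htwo : ∀ n : ℤ, (0:ℝ) < 2 ^ n := fun n => zpow_pos (by norm_num) n
  have hmem : ∀ n : ℤ, ∀ y, y ∈ A n ↔ y ∈ S ∧ (2:ℝ) ^ n ≤ ‖y‖ ∧ ‖y‖ < (2:ℝ) ^ (n + 1) := by
    intro n y
    rw [hAdef]
    rw [Set.mem_smul_set_iff_inv_smul_mem₀ (htwo n).ne']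
    have hnorm : ‖((2:ℝ) ^ n)⁻¹ • y‖ = ((2:ℝ) ^ n)⁻¹ * ‖y‖ := by
      rw [norm_smul, Real.norm_eq_abs, abs_of_pos (by positivity)]
    constructor
    · rintro ⟨h1, h2, h3⟩
      rw [hnorm] at h2 h3
      refine ⟨(hSsmul _ (by positivity) y).mp h1, ?_, ?_⟩
      · rw [inv_mul_eq_div, le_div_iff₀ (htwo n), one_mul] at h2
        exact h2
      · rw [inv_mul_eq_div, div_lt_iff₀ (htwo n)] at h3
        calc ‖y‖ < 2 * 2 ^ n := h3
        _ = (2:ℝ) ^ (n + 1) := by rw [zpow_add_one₀ (by norm_num : (2:ℝ) ≠ 0)]; ring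
    · rintro ⟨h1, h2, h3⟩
      refine ⟨(hSsmul _ (by positivity) y).mpr h1, ?_, ?_⟩
      · rw [hnorm, inv_mul_eq_div, le_div_iff₀ (htwo n), one_mul]
        exact h2
      · rw [hnorm, inv_mul_eq_div, div_lt_iff₀ (htwo n)]
        calc ‖y‖ < (2:ℝ) ^ (n + 1) := h3
        _ = 2 * 2 ^ n := by rw [zpow_add_one₀ (by norm_num : (2:ℝ) ≠ 0)]; ring
  have hAmeas : ∀ n : ℤ, MeasurableSet (A n) := by
    intro n
    show MeasurableSet (((2:ℝ) ^ n) • A₀)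
    rw [← Set.preimage_smul_inv₀ (htwo n).ne']
    exact (measurable_const_smul _) hA₀meas
  have hdisj : Pairwise (Function.onFun Disjoint A) := by
    have key : ∀ n n' : ℤ, n < n' → Disjoint (A n) (A n') := by
      intro n n' hlt
      rw [Set.disjoint_left]
      intro y hy hy'
      obtain ⟨_, _, h3⟩ := (hmem n y).mp hy
      obtain ⟨_, h2', _⟩ := (hmem n' y).mp hy'
      have : (2:ℝ) ^ (n + 1) ≤ (2:ℝ) ^ n' :=
        zpow_le_zpow_right₀ (by norm_num) (by omega)
      linarith
    intro n n' hne
    rcases lt_or_gt_of_ne hne with h | h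
    · exact key n n' h
    · exact (key n' n h).symm
  have hunion : (⋃ n : ℤ, A n) = S := by
    ext y
    simp only [Set.mem_iUnion]
    constructor
    · rintro ⟨n, hn⟩
      exact ((hmem n y).mp hn).1
    · intro hy
      have hy0 : 0 < ‖y‖ := by
        have i : Fin m := ⟨0, hm⟩
        calc (0:ℝ) < y i := hy i
        _ ≤ |y i| := le_abs_self _
        _ = ‖y i‖ := (Real.norm_eq_abs _).symm
        _ ≤ ‖y‖ := norm_le_pi_norm y i
      refine ⟨Int.log 2 ‖y‖, (hmem _ y).mpr ⟨hy, ?_, ?_⟩⟩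
      · have := Int.zpow_log_le_self (b := 2) (by norm_num) hy0
        simpa using this
      · have := Int.lt_zpow_succ_log_self (b := 2) (by norm_num) ‖y‖
        simpa using this
  -- each annulus carries the same integral
  have hconst : ∀ n : ℤ, ∫⁻ y in A n, F y = ∫⁻ y in A₀, F y := by
    intro n
    exact scale_lintegral_smul_set m F hF _ (htwo n) (hhomF _ (htwo n)) A₀ hA₀meas
  -- total integral is finite
  have hSval : ∫⁻ y in S, F y = ∫⁻ y in S, ENNReal.ofReal (g y) := by
    refine setLIntegral_congr_fun hS (fun y hy => ?_)
    rw [hFdef, Set.indicator_of_mem hy]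
  have hfin : ∫⁻ y in S, F y < ⊤ := by
    rw [hSval]
    have := hint.2
    rw [hasFiniteIntegral_iff_norm] at this
    refine lt_of_le_of_lt (le_of_eq ?_) this
    refine lintegral_congr fun y => ?_
    rw [Real.norm_eq_abs, abs_of_nonneg (hnonneg y)]
  -- decompose the integral over S
  have hdecomp : ∫⁻ y in S, F y = ∑' n : ℤ, ∫⁻ y in A n, F y := by
    rw [← hunion, lintegral_iUnion hAmeas hdisj]
  have hzero : ∫⁻ y in A₀, F y = 0 := by
    by_contra hne
    have : ∑' _ : ℤ, ∫⁻ y in A₀, F y = ⊤ := ENNReal.tsum_const_eq_top_of_ne_zero hne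
    rw [hdecomp] at hfin
    simp_rw [hconst] at hfin
    rw [this] at hfin
    exact lt_irrefl _ hfin
  have hStotal : ∫⁻ y in S, ENNReal.ofReal (g y) = 0 := by
    rw [← hSval, hdecomp]
    simp_rw [hconst, hzero]
    simp
  have := (lintegral_eq_zero_iff (ENNReal.measurable_ofReal.comp hmeas)).mp hStotal
  filter_upwards [this] with y hy
  have : ENNReal.ofReal (g y) = 0 := hy
  rw [ENNReal.ofReal_eq_zero] at this
  exact le_antisymm this (hnonneg y)
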